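/- arXiv:math/0607084 — 2 statements merged into one kernel-verified Lean document; each statement's English description precedes it below -/
import Mathlib

section
/- Let n be a positive integer and let V, A, B be real numbers with V > 0, A > V/n and 0 < B < 1. Define f(x) = A·(B − x)^{n−1}·(1 − x) − x. Then f(x) > 0 for every real x satisfying 0 ≤ x ≤ B^{n−1} / (n·(1 + V⁻¹)). -/
lemma statement9_key (B x : ℝ) (hB0 : 0 ≤ B) (hB1 : B ≤ 1)
    (hx0 : 0 ≤ x) (hxB : x ≤ B) :
    ∀ m : ℕ, B ^ m - (m + 1) * x ≤ (B - x) ^ m * (1 - x) := by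
  intro m
  induction m with
  | zero => simp
  | succ m ih =>
    have h1x : 0 ≤ 1 - x := by linarith
    have hBx : 0 ≤ B - x := by linarith
    have hQ0 : 0 ≤ (B - x) ^ m * (1 - x) :=
      mul_nonneg (pow_nonneg hBx m) h1x
    have hQb : (B - x) ^ m * (1 - x) ≤ B ^ m := by
      calc (B - x) ^ m * (1 - x) ≤ (B - x) ^ m * 1 := by
            apply mul_le_mul_of_nonneg_left (by linarith) (pow_nonneg hBx m)
        _ = (B - x) ^ m := by ring
        _ ≤ B ^ m := pow_le_pow_left₀ hBx (by linarith) m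
    have hb1 : B ^ m ≤ 1 := pow_le_one₀ hB0 hB1
    set Q := (B - x) ^ m * (1 - x) with hQdef
    have t1 : B * (B ^ m - Q) ≤ B ^ m - Q := by
      nlinarith [mul_nonneg (sub_nonneg.mpr hB1) (sub_nonneg.mpr hQb)]
    have t1' : B * (B ^ m - Q) ≤ ((m : ℝ) + 1) * x := le_trans t1 (by linarith)
    have t2 : x * Q ≤ x := by
      nlinarith [mul_nonneg hx0 (sub_nonneg.mpr (hQb.trans hb1))]
    have hid : (B - x) ^ (m + 1) * (1 - x) = B * B ^ m - (B * (B ^ m - Q) + x * Q) := by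
      rw [hQdef]; ring
    have hpow : B ^ (m + 1) = B * B ^ m := by ring
    push_cast
    linarith [t1', t2]

/-- Lemma 1: for a positive integer `n` and reals `V > 0`, `A > V/n`,
`0 < B < 1`, the function `f(x) = A(B-x)^{n-1}(1-x) - x` is positive for all
`0 ≤ x ≤ B^{n-1} / (n(1 + V⁻¹))`. -/
theorem statement9 (n : ℕ) (hn : 1 ≤ n) (V A B : ℝ)
    (hV : 0 < V) (hA : V / n < A) (hB0 : 0 < B) (hB1 : B < 1)
    (x : ℝ) (hx0 : 0 ≤ x) (hx1 : x ≤ B ^ (n - 1) / (n * (1 + V⁻¹))) :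
    0 < A * (B - x) ^ (n - 1) * (1 - x) - x := by
  have hn0 : 0 < (n : ℝ) := by exact_mod_cast hn
  have hV1 : 0 < 1 + V⁻¹ := by positivity
  have hden : 0 < (n : ℝ) * (1 + V⁻¹) := by positivity
  have hkey : x * ((n : ℝ) * (1 + V⁻¹)) ≤ B ^ (n - 1) :=
    (le_div_iff₀ hden).mp hx1
  have hA0 : 0 < A := lt_trans (div_pos hV hn0) hA
  rcases eq_or_lt_of_le hx0 with h | hx0'
  · -- x = 0
    subst h
    have : 0 < A * B ^ (n - 1) := by positivity
    simpa using this
  rcases Nat.lt_or_ge n 2 with hn2 | hn2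
  · -- n = 1
    have hn1 : n = 1 := le_antisymm (by omega) hn
    subst hn1
    simp only [Nat.cast_one] at hA hkey ⊢
    simp only [Nat.sub_self, pow_zero] at *
    -- hkey : x * (1 * (1 + V⁻¹)) ≤ 1
    have h1 : x + x * V⁻¹ ≤ 1 := by nlinarith
    have hxV : x * V⁻¹ ≤ 1 - x := by linarith
    have hVA : V < A := by simpa using hA
    have h2 : x = V * (x * V⁻¹) := by field_simp
    have h3 : V * (x * V⁻¹) ≤ V * (1 - x) := by
      exact mul_le_mul_of_nonneg_left hxV (le_of_lt hV)
    have h4 : V * (1 - x) < A * (1 - x) := by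
      apply mul_lt_mul_of_pos_right hVA
      nlinarith
    nlinarith
  · -- n ≥ 2
    have hm1 : 1 ≤ n - 1 := by omega
    have hBn : B ^ (n - 1) ≤ B := by
      calc B ^ (n - 1) ≤ B ^ 1 := pow_le_pow_of_le_one hB0.le hB1.le hm1
        _ = B := pow_one B
    have hden1 : 1 ≤ (n : ℝ) * (1 + V⁻¹) := by
      have : (1:ℝ) ≤ n := by exact_mod_cast hn
      nlinarith [inv_pos.mpr hV]
    have hxB : x ≤ B := by
      calc x ≤ B ^ (n - 1) / ((n : ℝ) * (1 + V⁻¹)) := hx1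
        _ ≤ B ^ (n - 1) := by
            apply div_le_self (by positivity) hden1
        _ ≤ B := hBn
    have hP := statement9_key B x hB0.le hB1.le hx0 hxB (n - 1)
    -- hP : B^(n-1) - ((n-1)+1)*x ≤ (B-x)^(n-1)*(1-x)
    have hcast : ((n - 1 : ℕ) : ℝ) + 1 = (n : ℝ) := by
      have : (n - 1) + 1 = n := by omega
      exact_mod_cast congrArg (Nat.cast : ℕ → ℝ) this
    rw [hcast] at hP
    set P := (B - x) ^ (n - 1) * (1 - x) with hPdef
    -- B^(n-1) ≥ n*x + n*x*V⁻¹ from hkey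
    have hk2 : (n : ℝ) * x + (n : ℝ) * x * V⁻¹ ≤ B ^ (n - 1) := by nlinarith
    have hP' : (n : ℝ) * x * V⁻¹ ≤ P := by linarith
    have hP0 : 0 < P := lt_of_lt_of_le (by positivity) hP'
    have h1 : V / n * P < A * P := mul_lt_mul_of_pos_right hA hP0
    have h2 : x ≤ V / n * P := by
      have h3 : V / (n : ℝ) * ((n : ℝ) * x * V⁻¹) = x := by
        field_simp
      have h4 : V / (n : ℝ) * ((n : ℝ) * x * V⁻¹) ≤ V / n * P :=
        mul_le_mul_of_nonneg_left hP' (by positivity)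
      linarith
    have hassoc : A * (B - x) ^ (n - 1) * (1 - x) = A * P := by rw [hPdef]; ring
    linarith
end

section
/- Let P = conv(S) ⊂ ℝ^N, where S is a finite set equal to the set of extreme points of P, and let d ≥ 2 be the dimension of the affine hull of P. Assign to each x ∈ S a mass ν_x > 0, and for a nonempty subset M' ⊆ S let c(M') = (Σ_{x∈M'} ν_x·x) / (Σ_{x∈M'} ν_x) be its center of mass. Let Δ ⊆ S be a d-element affinely independent subset such that conv(Δ) is contained in the relative boundary of P. Then conv(Δ ∪ {c(S)}) ∩ relint(P) ⊆ relint( conv(Δ ∪ {c(S \ Δ)}) ). -/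
open Set

noncomputable section

/-- The center of mass of a finite set of points of `ℝ^N` with masses `ν`. -/
def massCenter {N : ℕ} (ν : (Fin N → ℝ) → ℝ) (M : Finset (Fin N → ℝ)) : Fin N → ℝ :=
  (∑ x ∈ M, ν x)⁻¹ • ∑ x ∈ M, ν x • x

lemma posCombo_mem_intrinsicInterior {N : ℕ} {ι : Type*} [Fintype ι] [Nonempty ι]
    (p : ι → (Fin N → ℝ)) (w : ι → ℝ) (hw : ∀ i, 0 < w i) (hsum : ∑ i, w i = 1) :
    ∑ i, w i • p i ∈ intrinsicInterior ℝ (convexHull ℝ (Set.range p)) := by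
  classical
  set z : Fin N → ℝ := ∑ i, w i • p i with hz
  obtain ⟨i₀⟩ := ‹Nonempty ι›
  set x₀ : Fin N → ℝ := p i₀
  set D : Submodule ℝ (Fin N → ℝ) := vectorSpan ℝ (Set.range p) with hD
  -- the linear combination map onto D
  set T : (ι → ℝ) →ₗ[ℝ] (Fin N → ℝ) := Fintype.linearCombination ℝ (fun i => p i - x₀) with hT
  have hTapp : ∀ c : ι → ℝ, T c = ∑ i, c i • (p i - x₀) := fun c =>
    rfl
  have hrange : LinearMap.range T = D := by
    rw [hT, Fintype.range_linearCombination, hD,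
      vectorSpan_eq_span_vsub_set_right ℝ (Set.mem_range_self i₀)]
    congr 1
    ext v
    simp [vsub_eq_sub, x₀]
  have hmemD : ∀ c, T c ∈ D := fun c => hrange ▸ LinearMap.mem_range_self T c
  set T' : (ι → ℝ) →ₗ[ℝ] D := T.codRestrict D hmemD with hT'
  have hsurj : Function.Surjective T' := by
    rintro ⟨v, hv⟩
    rw [← hrange] at hv
    obtain ⟨c, hc⟩ := hv
    exact ⟨c, Subtype.ext hc⟩
  have hcont : Continuous T' := T'.continuous_of_finiteDimensional
  have hopen : IsOpenMap (⟨T', hcont⟩ : (ι → ℝ) →L[ℝ] D) :=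
    ContinuousLinearMap.isOpenMap _ hsurj
  -- choose radius r for coefficients
  set m : ℝ := Finset.univ.inf' Finset.univ_nonempty w with hm
  have hm0 : 0 < m := by
    rw [hm, Finset.lt_inf'_iff]
    exact fun i _ => hw i
  set n : ℝ := (Fintype.card ι : ℝ) with hn
  have hn0 : 0 ≤ n := Nat.cast_nonneg _
  set r : ℝ := m / (n + 2) with hr
  have hr0 : 0 < r := div_pos hm0 (by linarith)
  have hball : (⟨T', hcont⟩ : (ι → ℝ) →L[ℝ] D) '' Metric.ball 0 r ∈ nhds (0 : D) := by
    have := hopen.image_mem_nhds (Metric.ball_mem_nhds (0 : ι → ℝ) hr0)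
    simpa using this
  obtain ⟨ε, hε0, hε⟩ := Metric.mem_nhds_iff.1 hball
  -- key: small perturbations within D stay in the hull
  have key : ∀ u ∈ D, ‖u‖ < ε → z + u ∈ convexHull ℝ (Set.range p) := by
    intro u huD hu
    have : (⟨u, huD⟩ : D) ∈ Metric.ball (0 : D) ε := by
      simp only [Metric.mem_ball, dist_zero_right]
      simpa [Submodule.norm_coe] using hu
    obtain ⟨c, hcball, hcu⟩ := hε this
    have hcu' : T c = u := congrArg Subtype.val hcu
    have hcnorm : ‖c‖ < r := by simpa [dist_eq_norm] using hcball
    have hci : ∀ i, |c i| < r := fun i =>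
      lt_of_le_of_lt (by simpa [Real.norm_eq_abs] using norm_le_pi_norm c i) hcnorm
    -- new weights
    set w' : ι → ℝ := fun i => w i + c i - (if i = i₀ then ∑ j, c j else 0) with hw'
    have hsum' : ∑ i, w' i = 1 := by
      rw [hw']
      simp only [Finset.sum_sub_distrib, Finset.sum_add_distrib]
      rw [Finset.sum_ite_eq' Finset.univ i₀ (fun _ => ∑ j, c j)]
      simp [hsum]
    have hcsum : |∑ j, c j| ≤ n * r := by
      calc |∑ j, c j| ≤ ∑ j, |c j| := Finset.abs_sum_le_sum_abs _ _
        _ ≤ ∑ _j : ι, r := Finset.sum_le_sum (fun j _ => (hci j).le)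
        _ = n * r := by simp [hn, mul_comm]
    have hw'pos : ∀ i, 0 < w' i := by
      intro i
      have h1 : m ≤ w i := Finset.inf'_le _ (Finset.mem_univ i)
      have h2 : -r < c i := (abs_lt.1 (hci i)).1
      have h3 : (if i = i₀ then ∑ j, c j else 0) ≤ n * r := by
        split
        · exact (abs_le.1 hcsum).2
        · positivity
      have hrm : (n + 1) * r < m := by
        rw [hr]
        rw [div_eq_inv_mul, ← mul_assoc]
        have : (n + 1) * (n + 2)⁻¹ < 1 := by
          rw [mul_inv_lt_iff₀ (by linarith)]
          linarith
        calc (n+1) * (n+2)⁻¹ * m < 1 * m := by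
              exact mul_lt_mul_of_pos_right this hm0
          _ = m := one_mul m
      rw [hw']
      simp only
      linarith
    have hcombo : ∑ i, w' i • p i = z + u := by
      have h1 : ∀ i, w' i • p i
          = w i • p i + c i • p i - (if i = i₀ then (∑ j, c j) • x₀ else 0) := by
        intro i
        rw [hw']
        by_cases h : i = i₀
        · subst h
          simp [sub_smul, add_smul, x₀]
        · simp [h, add_smul]
      have h2 : T c = (∑ i, c i • p i) - (∑ j, c j) • x₀ := by
        rw [hTapp]
        simp only [smul_sub, Finset.sum_sub_distrib, Finset.sum_smul]
      rw [← hcu', h2, hz]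
      simp only [h1, Finset.sum_sub_distrib, Finset.sum_add_distrib,
        Finset.sum_ite_eq' Finset.univ i₀ (fun _ => (∑ j, c j) • x₀)]
      simp only [Finset.mem_univ, if_true]
      abel
    rw [← hcombo]
    have := Finset.centerMass_mem_convexHull (Finset.univ : Finset ι)
      (fun i _ => (hw'pos i).le) (by rw [hsum']; norm_num)
      (fun i _ => Set.mem_range_self (f := p) i)
    rw [Finset.centerMass, hsum'] at this
    simpa using this
  -- conclude membership in the intrinsic interior
  have hzmem : z ∈ convexHull ℝ (Set.range p) := by
    have := Finset.centerMass_mem_convexHull (Finset.univ : Finset ι)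
      (fun i _ => (hw i).le) (by rw [hsum]; norm_num)
      (fun i _ => Set.mem_range_self (f := p) i)
    rw [Finset.centerMass, hsum] at this
    simpa using this
  have hzA : z ∈ affineSpan ℝ (convexHull ℝ (Set.range p)) := subset_affineSpan ℝ _ hzmem
  refine mem_intrinsicInterior.2 ⟨⟨z, hzA⟩, ?_, rfl⟩
  rw [mem_interior_iff_mem_nhds, Metric.mem_nhds_iff]
  refine ⟨ε, hε0, ?_⟩
  rintro ⟨a, haA⟩ ha
  have hdist : dist a z < ε := by simpa [Subtype.dist_eq] using ha
  have hu : a - z ∈ D := by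
    have h1 := AffineSubspace.vsub_mem_direction haA hzA
    rwa [affineSpan_convexHull, direction_affineSpan, vsub_eq_sub] at h1
  have : z + (a - z) ∈ convexHull ℝ (Set.range p) :=
    key _ hu (by rwa [dist_eq_norm] at hdist)
  simpa using this

/-- with `P = conv S`, `S` the set of extreme points, `d ≥ 2` the
dimension of `P`, positive masses `ν`, and `Δ ⊆ S` a `d`-element affinely independent
subset with `conv Δ` in the relative boundary of `P`, one has
`conv(Δ ∪ {c(S)}) ∩ relint P ⊆ relint (conv(Δ ∪ {c(S \ Δ)}))`. -/
theorem statement14 (N : ℕ) (S : Finset (Fin N → ℝ))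
    (P : Set (Fin N → ℝ)) (hP : P = convexHull ℝ (S : Set (Fin N → ℝ)))
    (hext : (S : Set (Fin N → ℝ)) = Set.extremePoints ℝ P)
    (d : ℕ) (hd2 : 2 ≤ d)
    (hdim : Module.finrank ℝ (affineSpan ℝ P).direction = d)
    (ν : (Fin N → ℝ) → ℝ) (hν : ∀ x ∈ S, 0 < ν x)
    (Δ : Finset (Fin N → ℝ)) (hΔS : Δ ⊆ S) (hΔcard : Δ.card = d)
    (hΔindep : AffineIndependent ℝ (fun x : (Δ : Set (Fin N → ℝ)) => (x : Fin N → ℝ)))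
    (hΔbd : convexHull ℝ (Δ : Set (Fin N → ℝ)) ⊆ intrinsicFrontier ℝ P) :
    convexHull ℝ ((Δ : Set (Fin N → ℝ)) ∪ {massCenter ν S}) ∩ intrinsicInterior ℝ P ⊆
      intrinsicInterior ℝ
        (convexHull ℝ ((Δ : Set (Fin N → ℝ)) ∪ {massCenter ν (S \ Δ)})) := by
  classical
  rintro z ⟨hz1, hz2⟩
  -- interior and frontier are disjoint
  have hdisj : z ∉ intrinsicFrontier ℝ P := by
    rintro ⟨y', hy', hy'e⟩
    obtain ⟨y, hy, hye⟩ := mem_intrinsicInterior.1 hz2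
    have : y' = y := Subtype.coe_injective (hy'e.trans hye.symm)
    subst this
    exact hy'.2 hy
  have hzΔ : z ∉ convexHull ℝ (Δ : Set (Fin N → ℝ)) := fun h => hdisj (hΔbd h)
  have hΔne : Δ.Nonempty := Finset.card_pos.mp (by omega)
  have hΔne' : (Δ : Set (Fin N → ℝ)).Nonempty := hΔne.to_set
  -- S \ Δ is nonempty
  have hSΔne : (S \ Δ).Nonempty := by
    rw [Finset.sdiff_nonempty]
    intro hSsub
    have hSΔ : S = Δ := Finset.Subset.antisymm hSsub hΔS
    exact hzΔ (by rw [← hSΔ, ← hP]; exact intrinsicInterior_subset hz2)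
  -- masses
  set mΔ : ℝ := ∑ x ∈ Δ, ν x with hmΔ
  set m' : ℝ := ∑ x ∈ S \ Δ, ν x with hm'
  set mS : ℝ := ∑ x ∈ S, ν x with hmS
  have hmΔ0 : 0 < mΔ := Finset.sum_pos (fun x hx => hν x (hΔS hx)) hΔne
  have hm'0 : 0 < m' := Finset.sum_pos (fun x hx => hν x (Finset.mem_sdiff.1 hx).1) hSΔne
  have hmS0 : m' + mΔ = mS := Finset.sum_sdiff hΔS
  have hmSpos : 0 < mS := by rw [← hmS0]; positivity
  set c' : Fin N → ℝ := massCenter ν (S \ Δ) with hc'def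
  -- the sum over S \ Δ is m' • c'
  have hc'sum : (∑ x ∈ S \ Δ, ν x • x) = m' • c' := by
    rw [hc'def, massCenter, ← hm', smul_inv_smul₀ hm'0.ne']
  have hcS : massCenter ν S = mS⁻¹ • (m' • c' + ∑ x ∈ Δ, ν x • x) := by
    rw [massCenter, ← hmS, ← Finset.sum_sdiff hΔS (f := fun x => ν x • x), hc'sum]
  -- decompose z
  rw [Set.union_singleton, convexHull_insert hΔne', mem_convexJoin] at hz1
  obtain ⟨cx, hcx, y, hy, hseg⟩ := hz1
  rw [Set.mem_singleton_iff] at hcx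
  subst hcx
  obtain ⟨a, b, ha, hb, hab, heq⟩ := hseg
  have ha0 : 0 < a := by
    rcases ha.lt_or_eq with h | h
    · exact h
    · exfalso
      apply hzΔ
      have hb1 : b = 1 := by linarith
      have : y = z := by rw [← heq, ← h, hb1]; simp
      rwa [this] at hy
  obtain ⟨g, hg0, hg1, hgy⟩ := by rw [Finset.convexHull_eq] at hy; exact hy
  have hy' : y = ∑ x ∈ Δ, g x • x := by
    rw [← hgy, Finset.centerMass, hg1, inv_one, one_smul]
    rfl
  -- index type for the positive combination
  set ι : Type := Option {x // x ∈ Δ} with hι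
  have : Nonempty {x // x ∈ Δ} := ⟨⟨hΔne.choose, hΔne.choose_spec⟩⟩
  set p : ι → (Fin N → ℝ) := fun i => Option.elim i c' (fun x => (x : Fin N → ℝ)) with hp
  set w : ι → ℝ := fun i =>
    Option.elim i (a * (mS⁻¹ * m')) (fun x => a * (mS⁻¹ * ν x) + b * g x) with hw
  have hwpos : ∀ i, 0 < w i := by
    rintro (_ | ⟨x, hx⟩)
    · have : (0:ℝ) < mS⁻¹ := inv_pos.2 hmSpos
      simp only [hw, Option.elim]
      positivity
    · simp only [hw, Option.elim]
      have h1 : 0 < a * (mS⁻¹ * ν x) := by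
        have := hν x (hΔS hx)
        have : (0:ℝ) < mS⁻¹ := inv_pos.2 hmSpos
        positivity
      nlinarith [hg0 x hx, hb]
  have hwsum : ∑ i, w i = 1 := by
    rw [Fintype.sum_option]
    have h1 : ∑ x : {x // x ∈ Δ}, w (some x)
        = ∑ x ∈ Δ, (a * (mS⁻¹ * ν x) + b * g x) := by
      rw [← Finset.sum_coe_sort Δ (fun x => a * (mS⁻¹ * ν x) + b * g x)]
      simp only [hw, Option.elim]
    rw [h1, Finset.sum_add_distrib, ← Finset.mul_sum, ← Finset.mul_sum, ← Finset.mul_sum,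
      ← hmΔ, hg1, mul_one]
    show a * (mS⁻¹ * m') + (a * (mS⁻¹ * mΔ) + b) = 1
    have h2 : mS⁻¹ * mS = 1 := inv_mul_cancel₀ hmSpos.ne'
    calc a * (mS⁻¹ * m') + (a * (mS⁻¹ * mΔ) + b)
        = a * (mS⁻¹ * (m' + mΔ)) + b := by ring
      _ = a * (mS⁻¹ * mS) + b := by rw [hmS0]
      _ = 1 := by rw [h2, mul_one, hab]
  have hcombo : ∑ i, w i • p i = z := by
    rw [Fintype.sum_option]
    have h1 : ∑ x : {x // x ∈ Δ}, w (some x) • p (some x)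
        = ∑ x ∈ Δ, (a * (mS⁻¹ * ν x) + b * g x) • x := by
      rw [← Finset.sum_coe_sort Δ (fun x => (a * (mS⁻¹ * ν x) + b * g x) • x)]
      simp only [hw, hp, Option.elim]
    rw [h1, ← heq, hcS, hy']
    simp only [hw, hp, Option.elim, add_smul, Finset.sum_add_distrib, smul_add,
      Finset.smul_sum, smul_smul, mul_assoc]
    abel
  rw [← hcombo]
  have hrange : Set.range p = (Δ : Set (Fin N → ℝ)) ∪ {c'} := by
    ext v
    constructor
    · rintro ⟨(_ | ⟨x, hx⟩), rfl⟩
      · exact Or.inr rfl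
      · exact Or.inl hx
    · rintro (hv | hv)
      · exact ⟨some ⟨v, hv⟩, rfl⟩
      · exact ⟨none, hv.symm⟩
  have := posCombo_mem_intrinsicInterior p w hwpos hwsum
  rwa [hrange] at this
end
end
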